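/- Let n ≥ 4 be an integer and θ ≥ 1/√(2n-4). Then D(θ) ⊆ B(θ), where D(θ) = {y ∈ ℝⁿ : |y + θe₁|ⁿ ≤ (2n-4)y₁(y₁+θ), y₁ ≥ 0} and B(θ) = {y ∈ ℝⁿ : |y - θe₁| ≤ 1}. -/

import Mathlib

lemma bern3 (m : ℕ) (x : ℝ) (hx : 0 ≤ x) :
    1 + (m:ℝ)*x + (m:ℝ)*((m:ℝ)-1)/2 * x^2 + (m:ℝ)*((m:ℝ)-1)*((m:ℝ)-2)/6 * x^3 ≤ (1+x)^m := by
  induction m with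
  | zero => simp
  | succ m ih =>
    have hm : (0:ℝ) ≤ (m:ℝ) := Nat.cast_nonneg m
    have h1 : (0:ℝ) ≤ (m:ℝ)*((m:ℝ)-1) := by
      rcases Nat.eq_zero_or_pos m with h | h
      · simp [h]
      · have : (1:ℝ) ≤ (m:ℝ) := by exact_mod_cast h
        nlinarith
    have h2 : (0:ℝ) ≤ (m:ℝ)*((m:ℝ)-1)*((m:ℝ)-2) := by
      rcases Nat.lt_or_ge m 2 with h | h
      · interval_cases m <;> norm_num
      · have : (2:ℝ) ≤ (m:ℝ) := by exact_mod_cast h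
        nlinarith
    have step : (1 + (m:ℝ)*x + (m:ℝ)*((m:ℝ)-1)/2 * x^2 + (m:ℝ)*((m:ℝ)-1)*((m:ℝ)-2)/6 * x^3) * (1+x)
        ≤ (1+x)^(m+1) := by
      rw [pow_succ]
      exact mul_le_mul_of_nonneg_right ih (by linarith)
    refine le_trans ?_ step
    push_cast
    nlinarith [mul_nonneg h2 (mul_nonneg (mul_nonneg hx hx) (mul_nonneg hx hx))]

lemma amgm (D S x : ℝ) (hD : 0 ≤ D) (hS : 0 ≤ S) (hx : 0 ≤ x) (h : 4*D^3 ≤ 27*S^2) :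
    D*x^2 ≤ 1 + S*x^3 := by
  rcases eq_or_lt_of_le hS with hS0 | hS0
  · rw [← hS0] at h ⊢
    have h3 : D^3 = 0 := le_antisymm (by nlinarith) (pow_nonneg hD 3)
    have hD0 : D = 0 := (pow_eq_zero_iff three_ne_zero).mp h3
    simp [hD0]
  · have key : 0 ≤ 54*S^3*x^3 - 54*S^2*D*x^2 + 8*D^3 := by
      nlinarith [mul_nonneg (sq_nonneg (3*S*x - 2*D)) (by positivity : (0:ℝ) ≤ 6*S*x + 2*D)]
    have h2 : 54*S^2*(D*x^2) ≤ 54*S^2*(1 + S*x^3) := by nlinarith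
    exact le_of_mul_le_mul_left h2 (by positivity)

lemma key (n : ℕ) (hn : 4 ≤ n) (x : ℝ) (hx : 0 ≤ x) :
    (((n:ℝ)-2)*x/2 + (((n:ℝ)-2)*x/2)^2)^2 ≤ (1+x)^n := by
  set u : ℝ := ((n:ℝ)-2)*x/2 with hu
  have hn2 : (2:ℝ) ≤ (n:ℝ) := by
    have : (4:ℝ) ≤ (n:ℝ) := by exact_mod_cast hn
    linarith
  have hunn : 0 ≤ u := by
    have : (0:ℝ) ≤ (n:ℝ)-2 := by linarith
    positivity
  have hA : 0 ≤ u + u^2 := by positivity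
  clear_value u
  rcases Nat.even_or_odd n with ⟨m, hm⟩ | ⟨m, hm⟩
  · -- n = 2m, m ≥ 2
    have hm2 : 2 ≤ m := by omega
    have hmr : (2:ℝ) ≤ (m:ℝ) := by exact_mod_cast hm2
    have hnm : (n:ℝ) = 2*(m:ℝ) := by rw [hm]; push_cast; ring
    have hD : (0:ℝ) ≤ ((m:ℝ)-1)*((m:ℝ)-2)/2 := by nlinarith
    have hS : (0:ℝ) ≤ (m:ℝ)*((m:ℝ)-1)*((m:ℝ)-2)/6 := by nlinarith
    have hcond : 4*(((m:ℝ)-1)*((m:ℝ)-2)/2)^3 ≤ 27*((m:ℝ)*((m:ℝ)-1)*((m:ℝ)-2)/6)^2 := by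
      linarith [pow_nonneg (by linarith : (0:ℝ) ≤ (m:ℝ)-2) 2,
        pow_nonneg (by linarith : (0:ℝ) ≤ (m:ℝ)-2) 3,
        pow_nonneg (by linarith : (0:ℝ) ≤ (m:ℝ)-2) 4,
        pow_nonneg (by linarith : (0:ℝ) ≤ (m:ℝ)-2) 5,
        pow_nonneg (by linarith : (0:ℝ) ≤ (m:ℝ)-2) 6]
    have ham := amgm _ _ x hD hS hx hcond
    have hP : u + u^2 ≤ 1 + (m:ℝ)*x + (m:ℝ)*((m:ℝ)-1)/2 * x^2 + (m:ℝ)*((m:ℝ)-1)*((m:ℝ)-2)/6 * x^3 := by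
      rw [hu, hnm]; nlinarith
    have hB := bern3 m x hx
    have hP0 : (0:ℝ) ≤ 1 + (m:ℝ)*x + (m:ℝ)*((m:ℝ)-1)/2 * x^2 + (m:ℝ)*((m:ℝ)-1)*((m:ℝ)-2)/6 * x^3 :=
      le_trans hA hP
    calc (u + u^2)^2 ≤ ((1+x)^m)^2 := by
          apply pow_le_pow_left₀ hA (le_trans hP hB)
      _ = (1+x)^n := by rw [← pow_mul, hm]; ring_nf
  · -- n = 2m+1, m ≥ 2
    have hm2 : 2 ≤ m := by omega
    have hnm : (n:ℝ) = 2*(m:ℝ)+1 := by rw [hm]; push_cast; ring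
    have h1x : (0:ℝ) < 1 + x := by linarith
    rcases eq_or_lt_of_le hm2 with hm2' | hm3
    · -- m = 2, n = 5
      have hn5 : (n:ℝ) = 5 := by rw [hnm, ← hm2']; norm_num
      have hn5' : n = 5 := by omega
      have hu5 : u = 3*x/2 := by rw [hu, hn5]; ring
      rw [hn5', hu5]
      have h5 : ((1:ℝ)+x)^5 = 1+5*x+10*x^2+10*x^3+5*x^4+x^5 := by ring
      rw [h5]
      nlinarith [mul_nonneg (mul_nonneg (mul_nonneg hx hx) hx) (sq_nonneg (x - 1/32)),
        mul_nonneg hx hx, mul_nonneg (mul_nonneg hx hx) hx]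
    · have hm3' : 3 ≤ m := hm3
      have hmr : (3:ℝ) ≤ (m:ℝ) := by exact_mod_cast hm3'
      have hu' : u = (2*(m:ℝ)-1)*x/2 := by rw [hu, hnm]; ring
      set D : ℝ := (m:ℝ)*((m:ℝ)-2)/2 with hDdef
      set S : ℝ := (4*(m:ℝ)^3-12*(m:ℝ)^2+8*(m:ℝ)-3)/24 with hSdef
      have hD : 0 ≤ D := by rw [hDdef]; nlinarith
      have hS : 0 ≤ S := by rw [hSdef]; linarith [pow_nonneg (by linarith : (0:ℝ) ≤ (m:ℝ)-3) 2, pow_nonneg (by linarith : (0:ℝ) ≤ (m:ℝ)-3) 3]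
      have hcond : 4*D^3 ≤ 27*S^2 := by
        rw [hDdef, hSdef]
        linarith [pow_nonneg (by linarith : (0:ℝ) ≤ (m:ℝ)-3) 2,
          pow_nonneg (by linarith : (0:ℝ) ≤ (m:ℝ)-3) 3,
          pow_nonneg (by linarith : (0:ℝ) ≤ (m:ℝ)-3) 4,
          pow_nonneg (by linarith : (0:ℝ) ≤ (m:ℝ)-3) 5,
          pow_nonneg (by linarith : (0:ℝ) ≤ (m:ℝ)-3) 6]
      have ham := amgm D S x hD hS hx hcond
      have hid : (1 + ((m:ℝ)+1)*x + ((m:ℝ)+1)*(m:ℝ)/2 * x^2 + ((m:ℝ)+1)*(m:ℝ)*(((m:ℝ)+1)-2)/6 * x^3)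
          - (u + u^2)*(1+x/2) = 1 + 3/2*x - D*x^2 + S*x^3 := by
        rw [hu', hDdef, hSdef]; ring
      have hP : (u + u^2)*(1+x/2) ≤ 1 + ((m:ℝ)+1)*x + ((m:ℝ)+1)*(m:ℝ)/2 * x^2 + ((m:ℝ)+1)*(m:ℝ)*(((m:ℝ)+1)-2)/6 * x^3 := by
        linarith [ham, hx]
      have hB := bern3 (m+1) x hx
      push_cast at hB
      have hB' : 1 + ((m:ℝ)+1)*x + ((m:ℝ)+1)*(m:ℝ)/2 * x^2 + ((m:ℝ)+1)*(m:ℝ)*(((m:ℝ)+1)-2)/6 * x^3 ≤ (1+x)^(m+1) := by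
        convert hB using 2 <;> ring
      have hfac : 0 ≤ (u+u^2)*(1+x/2) := by positivity
      have hsq : ((u + u^2)*(1+x/2))^2 ≤ ((1+x)^(m+1))^2 :=
        pow_le_pow_left₀ hfac (le_trans hP hB') 2
      have hexp : ((1+x)^(m+1))^2 = (1+x)^n * (1+x) := by
        rw [← pow_mul, hm, ← pow_succ]
        congr 1
        omega
      have hstep : (u+u^2)^2 * (1+x) ≤ ((u + u^2)*(1+x/2))^2 := by
        have hdiff : ((u+u^2)*(1+x/2))^2 - (u+u^2)^2 * (1+x) = (u+u^2)^2*x^2/4 := by ring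
        linarith [hdiff, mul_nonneg (sq_nonneg (u+u^2)) (sq_nonneg x)]
      have hmain : (u+u^2)^2 * (1+x) ≤ (1+x)^n * (1+x) := by
        rw [← hexp]; exact le_trans hstep hsq
      exact le_of_mul_le_mul_right hmain h1x

set_option maxHeartbeats 1000000 in
theorem stmt_15 (n : ℕ) (hn : 4 ≤ n) (θ : ℝ)
    (hθ : 1 / Real.sqrt (2 * (n : ℝ) - 4) ≤ θ)
    (y : EuclideanSpace ℝ (Fin n)) (hy1 : 0 ≤ y ⟨0, by omega⟩)
    (hy : ‖y + θ • EuclideanSpace.single (⟨0, by omega⟩ : Fin n) (1 : ℝ)‖ ^ n ≤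
      (2 * (n : ℝ) - 4) * y ⟨0, by omega⟩ * (y ⟨0, by omega⟩ + θ)) :
    ‖y - θ • EuclideanSpace.single (⟨0, by omega⟩ : Fin n) (1 : ℝ)‖ ≤ 1 := by
  have hnr : (4:ℝ) ≤ (n:ℝ) := by exact_mod_cast hn
  set c : ℝ := 2 * (n:ℝ) - 4 with hc
  have hcpos : 0 < c := by rw [hc]; linarith
  have hθpos : 0 < θ := lt_of_lt_of_le (by positivity) hθ
  have hcθ : 1 ≤ c * θ^2 := by
    have hsq : Real.sqrt c > 0 := Real.sqrt_pos.mpr hcpos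
    have h1 : 1 ≤ θ * Real.sqrt c := by
      rw [div_le_iff₀ hsq] at hθ; linarith
    have h2 : Real.sqrt c ^ 2 = c := Real.sq_sqrt hcpos.le
    nlinarith [h1, h2, hsq.le]
  set i0 : Fin n := ⟨0, by omega⟩ with hi0
  set t : ℝ := y i0 with hT
  set e : EuclideanSpace ℝ (Fin n) := EuclideanSpace.single i0 (1:ℝ) with he
  have hip : (inner ℝ y e : ℝ) = t := by
    rw [he, EuclideanSpace.inner_single_right]
    simp [hT]
  have hne : ‖e‖ = 1 := by rw [he, EuclideanSpace.norm_single]; norm_num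
  have hipθ : (inner ℝ y (θ • e) : ℝ) = θ * t := by rw [real_inner_smul_right, hip]
  have hnθe : ‖θ • e‖^2 = θ^2 := by
    rw [norm_smul, hne]; simp [sq_abs]
  have hR2 : ‖y + θ • e‖^2 = ‖y‖^2 + 2*(θ*t) + θ^2 := by
    rw [norm_add_sq_real, hipθ, hnθe]
  have hr2 : ‖y - θ • e‖^2 = ‖y‖^2 - 2*(θ*t) + θ^2 := by
    rw [norm_sub_sq_real, hipθ, hnθe]
  set R : ℝ := ‖y + θ • e‖ with hR
  set r : ℝ := ‖y - θ • e‖ with hrr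
  have hR0 : 0 ≤ R := norm_nonneg _
  have hr0 : 0 ≤ r := norm_nonneg _
  set x : ℝ := 4*θ*t with hx
  have hx0 : 0 ≤ x := by rw [hx]; positivity
  set u : ℝ := c*θ*t with huu
  have hstep1 : c * t * (t + θ) ≤ u + u^2 := by
    rw [huu]
    nlinarith [mul_nonneg (mul_nonneg hcpos.le (sq_nonneg t)) (sub_nonneg.mpr hcθ)]
  have hct0 : 0 ≤ c * t * (t + θ) := by positivity
  have hkey := key n hn x hx0
  have humatch : u = ((n:ℝ)-2)*x/2 := by rw [huu, hx, hc]; ring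
  have hchain : (R^2)^n ≤ (1+x)^n := by
    calc (R^2)^n = (R^n)^2 := by rw [← pow_mul, ← pow_mul, Nat.mul_comm]
      _ ≤ (c * t * (t + θ))^2 := pow_le_pow_left₀ (pow_nonneg hR0 n) hy 2
      _ ≤ (u + u^2)^2 := pow_le_pow_left₀ hct0 hstep1 2
      _ ≤ (1+x)^n := by rw [humatch]; exact hkey
  have hR2le : R^2 ≤ 1 + x := by
    refine le_of_pow_le_pow_left₀ (by omega) (by positivity) hchain
  have : r^2 ≤ 1 := by rw [hr2]; rw [hR2] at hR2le; rw [hx] at hR2le; linarith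
  nlinarith [hr0, this]
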